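/- arXiv:2102.01583 — 5 statements merged into one kernel-verified Lean document; each statement's English description precedes it below -/
import Mathlib

section
/- For all real x, |ψ'''(x)| ≤ 2β·(ψ''(x))^{3/2}, where ψ''(x) = H/(4 + Hβ²x²) and ψ'''(x) = −2H²β²x/(4 + Hβ²x²)². -/
theorem stmt_3 (H β : ℝ) (hH : 0 < H) (hβ : 0 < β) :
    let ψ'' : ℝ → ℝ := fun x => H / (4 + H * β ^ 2 * x ^ 2)
    let ψ''' : ℝ → ℝ := fun x => -2 * H ^ 2 * β ^ 2 * x / (4 + H * β ^ 2 * x ^ 2) ^ 2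
    ∀ x : ℝ, |ψ''' x| ≤ 2 * β * (ψ'' x) ^ ((3 : ℝ) / 2) := by
  intro ψ'' ψ''' x
  have hD : (0:ℝ) < 4 + H * β ^ 2 * x ^ 2 := by positivity
  have hψ : 0 ≤ ψ'' x := by
    simp only [ψ'']
    positivity
  have hR : 0 ≤ 2 * β * (ψ'' x) ^ ((3 : ℝ) / 2) := by positivity
  have hsq : ((ψ'' x) ^ ((3 : ℝ) / 2)) ^ 2 = (ψ'' x) ^ 3 := by
    rw [← Real.rpow_natCast ((ψ'' x) ^ ((3 : ℝ) / 2)) 2, ← Real.rpow_mul hψ]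
    norm_num
  have key : (ψ''' x) ^ 2 ≤ (2 * β * (ψ'' x) ^ ((3 : ℝ) / 2)) ^ 2 := by
    rw [mul_pow, mul_pow, hsq]
    simp only [ψ''', ψ'']
    rw [div_pow, div_pow, ← mul_div_assoc, div_le_div_iff₀ (by positivity) (by positivity)]
    ring_nf
    nlinarith [mul_nonneg (mul_nonneg (pow_pos hH 4).le (pow_pos hβ 4).le) (sq_nonneg x),
      mul_nonneg (mul_nonneg (pow_pos hH 5).le (pow_pos hβ 6).le) (pow_nonneg (sq_nonneg x) 2),
      mul_nonneg (mul_nonneg (pow_pos hH 6).le (pow_pos hβ 8).le) (pow_nonneg (sq_nonneg x) 3),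
      mul_pos (pow_pos hH 3) (pow_pos hβ 2)]
  calc |ψ''' x| = Real.sqrt ((ψ''' x) ^ 2) := by rw [Real.sqrt_sq_eq_abs]
    _ ≤ Real.sqrt ((2 * β * (ψ'' x) ^ ((3 : ℝ) / 2)) ^ 2) := Real.sqrt_le_sqrt key
    _ = 2 * β * (ψ'' x) ^ ((3 : ℝ) / 2) := Real.sqrt_sq hR
end

section
/- For the function F(x) = −ψ'(ζ)·x₁ + ψ(x_N) + Σ_{i=1}^{N−1} ψ(x_{i+1} − x_i) on ℝ^N, where ψ is convex with 0 ≤ ψ'' ≤ H/4, the Hessian satisfies u^T ∇²F(x) u ≤ H‖u‖² for every x and u; hence F is H-smooth. -/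
open Finset

variable {E : Type*} [NormedAddCommGroup E] [InnerProductSpace ℝ E] [CompleteSpace E]

theorem aux_main {ι : Type*} [Fintype ι] (ψ : ℝ → ℝ) (hψ : ContDiff ℝ 2 ψ)
    (H : ℝ) (hH : 0 < H)
    (hψ'' : ∀ x : ℝ, 0 ≤ deriv (deriv ψ) x ∧ deriv (deriv ψ) x ≤ H / 4)
    (T : ι → E →L[ℝ] ℝ) (hT : ∀ u : E, ∑ j, (T j u) ^ 2 ≤ 4 * ‖u‖ ^ 2)
    (c : E →L[ℝ] ℝ) :
    (∀ x u : E, iteratedFDeriv ℝ 2 (fun x => c x + ∑ j, ψ (T j x)) x ![u, u] ≤ H * ‖u‖ ^ 2) ∧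
    (∀ x y : E, ‖gradient (fun x => c x + ∑ j, ψ (T j x)) x
      - gradient (fun x => c x + ∑ j, ψ (T j x)) y‖ ≤ H * ‖x - y‖) := by
  set F : E → ℝ := fun x => c x + ∑ j, ψ (T j x) with hF
  have hψ1 : Differentiable ℝ ψ := hψ.differentiable (by norm_num)
  have hψd : ContDiff ℝ 1 (deriv ψ) := (contDiff_succ_iff_deriv.mp (by exact hψ)).2.2
  have hψ2 : Differentiable ℝ (deriv ψ) := hψd.differentiable (by norm_num)
  have hd1 : ∀ t : ℝ, HasDerivAt ψ (deriv ψ t) t := fun t => (hψ1 t).hasDerivAt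
  have hd2 : ∀ t : ℝ, HasDerivAt (deriv ψ) (deriv (deriv ψ) t) t := fun t => (hψ2 t).hasDerivAt
  set A : E → (E →L[ℝ] ℝ) := fun x => c + ∑ j, deriv ψ (T j x) • (T j : E →L[ℝ] ℝ) with hA
  set B : E → (E →L[ℝ] E →L[ℝ] ℝ) := fun x => ∑ j,
    (ContinuousLinearMap.toSpanSingleton ℝ (T j : E →L[ℝ] ℝ)).comp
      (deriv (deriv ψ) (T j x) • (T j : E →L[ℝ] ℝ)) with hB
  have hFA : ∀ x : E, HasFDerivAt F (A x) x := by
    intro x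
    exact (c.hasFDerivAt).add <| HasFDerivAt.fun_sum fun j _ =>
      (hd1 (T j x)).comp_hasFDerivAt x (T j).hasFDerivAt
  have hAB : ∀ x : E, HasFDerivAt A (B x) x := by
    intro x
    have : HasFDerivAt (fun y : E => (c : E →L[ℝ] ℝ)
        + ∑ j, deriv ψ (T j y) • (T j : E →L[ℝ] ℝ)) (0 + B x) x := by
      refine (hasFDerivAt_const _ _).add (HasFDerivAt.fun_sum fun j _ => ?_)
      exact (ContinuousLinearMap.toSpanSingleton ℝ (T j : E →L[ℝ] ℝ)).hasFDerivAt.comp x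
        ((hd2 (T j x)).comp_hasFDerivAt x (T j).hasFDerivAt)
    convert this using 1; exact (zero_add _).symm
  have hfd : fderiv ℝ F = A := funext fun x => (hFA x).fderiv
  have hBapp : ∀ (x u v : E), B x u v = ∑ j, deriv (deriv ψ) (T j x) * (T j u * T j v) := by
    intro x u v
    simp [hB, ContinuousLinearMap.sum_apply, ContinuousLinearMap.toSpanSingleton_apply,
      mul_assoc]
  have key : ∀ (x u v : E), |B x u v| ≤ H * ‖u‖ * ‖v‖ := by
    intro x u v
    set S := ∑ j, deriv (deriv ψ) (T j x) * (|T j u| * |T j v|) with hS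
    have habs : |B x u v| ≤ S := by
      rw [hBapp]
      refine (Finset.abs_sum_le_sum_abs _ _).trans (Finset.sum_le_sum fun j _ => ?_)
      rw [abs_mul, abs_mul, abs_of_nonneg (hψ'' (T j x)).1]
    have hsum : ∀ w : E, ∑ j, deriv (deriv ψ) (T j x) * (T j w) ^ 2 ≤ H * ‖w‖ ^ 2 := by
      intro w
      calc ∑ j, deriv (deriv ψ) (T j x) * (T j w) ^ 2
          ≤ ∑ j, (H / 4) * (T j w) ^ 2 :=
            Finset.sum_le_sum fun j _ =>
              mul_le_mul_of_nonneg_right (hψ'' (T j x)).2 (sq_nonneg _)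
        _ = (H / 4) * ∑ j, (T j w) ^ 2 := by rw [Finset.mul_sum]
        _ ≤ (H / 4) * (4 * ‖w‖ ^ 2) :=
            mul_le_mul_of_nonneg_left (hT w) (by positivity)
        _ = H * ‖w‖ ^ 2 := by ring
    have hCS : S ^ 2 ≤ (H * ‖u‖ * ‖v‖) ^ 2 := by
      have h1 : S = ∑ j, (Real.sqrt (deriv (deriv ψ) (T j x)) * |T j u|) *
          (Real.sqrt (deriv (deriv ψ) (T j x)) * |T j v|) := by
        refine Finset.sum_congr rfl fun j _ => ?_
        rw [show (Real.sqrt (deriv (deriv ψ) (T j x)) * |T j u|) *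
            (Real.sqrt (deriv (deriv ψ) (T j x)) * |T j v|)
          = (Real.sqrt (deriv (deriv ψ) (T j x)) * Real.sqrt (deriv (deriv ψ) (T j x)))
            * (|T j u| * |T j v|) from by ring,
          Real.mul_self_sqrt (hψ'' (T j x)).1]
      rw [h1]
      refine (Finset.sum_mul_sq_le_sq_mul_sq _ _ _).trans ?_
      have e1 : ∀ w : E, ∑ j, (Real.sqrt (deriv (deriv ψ) (T j x)) * |T j w|) ^ 2
          = ∑ j, deriv (deriv ψ) (T j x) * (T j w) ^ 2 := by
        intro w
        refine Finset.sum_congr rfl fun j _ => ?_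
        rw [mul_pow, Real.sq_sqrt (hψ'' (T j x)).1, sq_abs]
      rw [e1, e1, show (H * ‖u‖ * ‖v‖) ^ 2 = (H * ‖u‖ ^ 2) * (H * ‖v‖ ^ 2) from by ring]
      have h5 : (0:ℝ) ≤ ∑ j, deriv (deriv ψ) (T j x) * (T j v) ^ 2 :=
        Finset.sum_nonneg fun j _ => mul_nonneg (hψ'' (T j x)).1 (sq_nonneg _)
      exact mul_le_mul (hsum u) (hsum v) h5 (by positivity)
    have hS0 : 0 ≤ S :=
      Finset.sum_nonneg fun j _ => mul_nonneg (hψ'' (T j x)).1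
        (mul_nonneg (abs_nonneg _) (abs_nonneg _))
    have hK0 : 0 ≤ H * ‖u‖ * ‖v‖ := by positivity
    have hfin := Real.sqrt_le_sqrt hCS
    rw [Real.sqrt_sq hS0, Real.sqrt_sq hK0] at hfin
    linarith [habs]
  have hBnorm : ∀ x : E, ‖B x‖ ≤ H := by
    intro x
    refine ContinuousLinearMap.opNorm_le_bound _ hH.le fun u => ?_
    refine ContinuousLinearMap.opNorm_le_bound _ (by positivity) fun v => ?_
    calc ‖B x u v‖ ≤ H * ‖u‖ * ‖v‖ := key x u v
      _ = H * ‖u‖ * ‖v‖ := rfl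
  constructor
  · intro x u
    have h2 : iteratedFDeriv ℝ 2 F x ![u, u] = B x u u := by
      rw [iteratedFDeriv_two_apply, hfd, (hAB x).fderiv]
      simp
    rw [h2, hBapp]
    have hsum : ∀ w : E, ∑ j, deriv (deriv ψ) (T j x) * (T j w) ^ 2 ≤ H * ‖w‖ ^ 2 := by
      intro w
      calc ∑ j, deriv (deriv ψ) (T j x) * (T j w) ^ 2
          ≤ ∑ j, (H / 4) * (T j w) ^ 2 :=
            Finset.sum_le_sum fun j _ =>
              mul_le_mul_of_nonneg_right (hψ'' (T j x)).2 (sq_nonneg _)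
        _ = (H / 4) * ∑ j, (T j w) ^ 2 := by rw [Finset.mul_sum]
        _ ≤ (H / 4) * (4 * ‖w‖ ^ 2) :=
            mul_le_mul_of_nonneg_left (hT w) (by positivity)
        _ = H * ‖w‖ ^ 2 := by ring
    simpa [sq] using hsum u
  · intro x y
    have hgr : ∀ z : E, gradient F z = (InnerProductSpace.toDual ℝ E).symm (fderiv ℝ F z) :=
      fun z => rfl
    rw [hgr, hgr, ← LinearIsometryEquiv.map_sub, LinearIsometryEquiv.norm_map]
    have := Convex.norm_image_sub_le_of_norm_fderiv_le (f := A) (C := H)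
      (fun z _ => (hAB z).differentiableAt) (fun z _ => by rw [(hAB z).fderiv]; exact hBnorm z)
      convex_univ (Set.mem_univ y) (Set.mem_univ x)
    rw [hfd]
    simpa [norm_sub_rev] using this
set_option maxHeartbeats 1000000 in
theorem stmt_7 (N : ℕ) (hN : 2 ≤ N) (H β ζ : ℝ) (hH : 0 < H) (hβ : 0 < β) (hζ : 0 < ζ)
    (ψ : ℝ → ℝ) (hψ : ContDiff ℝ 2 ψ)
    (hψ'' : ∀ x : ℝ, 0 ≤ deriv (deriv ψ) x ∧ deriv (deriv ψ) x ≤ H / 4) :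
    let F : EuclideanSpace ℝ (Fin N) → ℝ := fun x =>
      -(deriv ψ ζ) * x ⟨0, by omega⟩ + ψ (x ⟨N - 1, by omega⟩)
        + ∑ i : Fin (N - 1), ψ (x ⟨i.1 + 1, by have := i.2; omega⟩ - x ⟨i.1, by have := i.2; omega⟩)
    (∀ (x u : EuclideanSpace ℝ (Fin N)), iteratedFDeriv ℝ 2 F x ![u, u] ≤ H * ‖u‖ ^ 2) ∧
    (∀ x y : EuclideanSpace ℝ (Fin N), ‖gradient F x - gradient F y‖ ≤ H * ‖x - y‖) := by
  obtain ⟨M, rfl⟩ : ∃ M, N = M + 2 := ⟨N - 2, by omega⟩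
  intro F
  set T : Option (Fin (M + 1)) → (EuclideanSpace ℝ (Fin (M + 2)) →L[ℝ] ℝ) := fun j =>
    match j with
    | none => EuclideanSpace.proj (⟨M + 1, by omega⟩ : Fin (M + 2))
    | some i => EuclideanSpace.proj (⟨i.1 + 1, by omega⟩ : Fin (M + 2))
        - EuclideanSpace.proj (⟨i.1, by omega⟩ : Fin (M + 2)) with hTdef
  set c : EuclideanSpace ℝ (Fin (M + 2)) →L[ℝ] ℝ :=
    -(deriv ψ ζ) • EuclideanSpace.proj (⟨0, by omega⟩ : Fin (M + 2)) with hcdef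
  have hFeq : F = fun x => c x + ∑ j, ψ (T j x) := by
    funext x
    show -(deriv ψ ζ) * x ⟨0, by omega⟩ + ψ (x ⟨M + 2 - 1, by omega⟩)
        + ∑ i : Fin (M + 2 - 1), ψ (x ⟨i.1 + 1, by have := i.2; omega⟩
            - x ⟨i.1, by have := i.2; omega⟩) = _
    simp only [hcdef, hTdef, Fintype.sum_option, ContinuousLinearMap.smul_apply,
      ContinuousLinearMap.sub_apply, ContinuousLinearMap.neg_apply,
      PiLp.proj_apply, smul_eq_mul]
    rw [add_assoc]
    rfl
  have hT : ∀ u : EuclideanSpace ℝ (Fin (M + 2)), ∑ j, (T j u) ^ 2 ≤ 4 * ‖u‖ ^ 2 := by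
    intro u
    have hn : ‖u‖ ^ 2 = ∑ j : Fin (M + 2), (u j) ^ 2 := by
      rw [EuclideanSpace.norm_eq, Real.sq_sqrt (by positivity)]
      exact Finset.sum_congr rfl fun j _ => by rw [Real.norm_eq_abs, sq_abs]
    rw [Fintype.sum_option]
    have e0 : T none u = u (Fin.last (M + 1)) := rfl
    have e1 : ∀ i : Fin (M + 1), T (some i) u = u i.succ - u i.castSucc := fun i => rfl
    rw [e0]
    rw [Finset.sum_congr rfl fun i _ => congrArg (· ^ 2) (e1 i)]
    have hstep : ∑ i : Fin (M + 1), (u i.succ - u i.castSucc) ^ 2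
        ≤ ∑ i : Fin (M + 1), (2 * (u i.succ) ^ 2 + 2 * (u i.castSucc) ^ 2) :=
      Finset.sum_le_sum fun i _ => by nlinarith [sq_nonneg (u i.succ + u i.castSucc)]
    have hs1 : ∑ j : Fin (M + 2), (u j) ^ 2
        = (u 0) ^ 2 + ∑ i : Fin (M + 1), (u i.succ) ^ 2 :=
      Fin.sum_univ_succ _
    have hs2 : ∑ j : Fin (M + 2), (u j) ^ 2
        = ∑ i : Fin (M + 1), (u i.castSucc) ^ 2 + (u (Fin.last (M + 1))) ^ 2 :=
      Fin.sum_univ_castSucc _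
    have hdist : ∑ i : Fin (M + 1), (2 * (u i.succ) ^ 2 + 2 * (u i.castSucc) ^ 2)
        = 2 * (∑ i : Fin (M + 1), (u i.succ) ^ 2)
          + 2 * (∑ i : Fin (M + 1), (u i.castSucc) ^ 2) := by
      rw [Finset.sum_add_distrib, Finset.mul_sum, Finset.mul_sum]
    rw [hn]
    nlinarith [sq_nonneg (u 0), sq_nonneg (u (Fin.last (M + 1)))]
  rw [hFeq]
  exact aux_main ψ hψ H hH hψ'' T hT c
end

section
/- The function Γ̃(t) defined as 0 for t ≤ 0, as (∫₀^t exp(−1/(s(1−s))) ds)/(∫₀¹ exp(−1/(s(1−s))) ds) for 0 < t < 1, and as 1 for t ≥ 1, is twice continuously differentiable on ℝ, and satisfies |Γ̃'(t)| ≤ 4 and |Γ̃''(t)| ≤ 60 for all t. -/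
open Real MeasureTheory Set

noncomputable def myf (s : ℝ) : ℝ := expNegInvGlue s * expNegInvGlue (1 - s)

lemma myf_contDiff {n : ℕ∞} : ContDiff ℝ n myf :=
  expNegInvGlue.contDiff.mul (expNegInvGlue.contDiff.comp (contDiff_const.sub contDiff_id))

lemma myf_nonneg (s : ℝ) : 0 ≤ myf s :=
  mul_nonneg (expNegInvGlue.nonneg _) (expNegInvGlue.nonneg _)

lemma myf_cont : Continuous myf := (myf_contDiff (n := 0)).continuous

lemma myf_eq {s : ℝ} (h0 : 0 < s) (h1 : s < 1) :
    myf s = Real.exp (-(1 / (s * (1 - s)))) := by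
  have h1' : 0 < 1 - s := by linarith
  rw [myf, expNegInvGlue, expNegInvGlue, if_neg (not_le.2 h0), if_neg (not_le.2 h1'),
    ← Real.exp_add]
  congr 1
  field_simp
  ring

lemma myf_zero_left {s : ℝ} (h : s ≤ 0) : myf s = 0 := by
  rw [myf, expNegInvGlue.zero_of_nonpos h, zero_mul]

lemma myf_zero_right {s : ℝ} (h : 1 ≤ s) : myf s = 0 := by
  rw [myf, expNegInvGlue.zero_of_nonpos (by linarith : 1 - s ≤ 0), mul_zero]

lemma myf_le (s : ℝ) : myf s ≤ Real.exp (-4) := by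
  rcases le_or_gt s 0 with h | h
  · rw [myf_zero_left h]; positivity
  rcases le_or_gt 1 s with h1 | h1
  · rw [myf_zero_right h1]; positivity
  rw [myf_eq h h1]
  apply Real.exp_le_exp.2
  have hs : 0 < s * (1 - s) := mul_pos h (by linarith)
  have h4 : s * (1 - s) ≤ 1 / 4 := by nlinarith [sq_nonneg (s - 1/2)]
  have : (4 : ℝ) ≤ 1 / (s * (1 - s)) := by
    rw [le_div_iff₀ hs]; linarith
  linarith

lemma phi_hasDerivAt {s : ℝ} (hs : 0 < s) :
    HasDerivAt expNegInvGlue (expNegInvGlue s * s⁻¹ ^ 2) s := by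
  have hev : expNegInvGlue =ᶠ[nhds s] fun x => Real.exp (-x⁻¹) := by
    filter_upwards [IsOpen.mem_nhds isOpen_Ioi hs] with x hx
    rw [expNegInvGlue, if_neg (not_le.2 hx)]
  have h1 : HasDerivAt (fun x : ℝ => -x⁻¹) (s⁻¹ ^ 2) s := by
    have := (hasDerivAt_inv hs.ne').neg
    refine this.congr_deriv ?_
    rw [neg_neg]
    field_simp
  have h2 : HasDerivAt (fun x : ℝ => Real.exp (-x⁻¹)) (Real.exp (-s⁻¹) * s⁻¹ ^ 2) s := h1.exp
  rw [hev.hasDerivAt_iff]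
  refine h2.congr_deriv ?_
  congr 1
  rw [expNegInvGlue, if_neg (not_le.2 hs)]

lemma myf_hasDerivAt {s : ℝ} (h0 : 0 < s) (h1 : s < 1) :
    HasDerivAt myf (myf s * (s⁻¹ ^ 2 - (1 - s)⁻¹ ^ 2)) s := by
  have h1' : 0 < 1 - s := by linarith
  have ha : HasDerivAt (fun x : ℝ => expNegInvGlue (1 - x))
      (-(expNegInvGlue (1 - s) * (1 - s)⁻¹ ^ 2)) s := by
    have := (phi_hasDerivAt h1').comp s ((hasDerivAt_id s).const_sub 1)
    refine this.congr_deriv ?_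
    ring
  have := (phi_hasDerivAt h0).mul ha
  refine this.congr_deriv ?_
  rw [myf]
  ring

lemma key_est {u : ℝ} (hu : 4 ≤ u) : Real.exp (-u) * u ^ 2 ≤ 16 * Real.exp (-4) := by
  have h1 : (u - 4) / 2 + 1 ≤ Real.exp ((u - 4) / 2) := Real.add_one_le_exp _
  have h2 : Real.exp (u - 4) = Real.exp ((u - 4) / 2) * Real.exp ((u - 4) / 2) := by
    rw [← Real.exp_add]; ring_nf
  have h3 : u ^ 2 ≤ 16 * Real.exp (u - 4) := by
    nlinarith [Real.exp_pos ((u - 4) / 2), sq_nonneg (u - 4)]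
  have h4 : Real.exp (-u) * Real.exp (u - 4) = Real.exp (-4) := by
    rw [← Real.exp_add]; ring_nf
  calc Real.exp (-u) * u ^ 2 ≤ Real.exp (-u) * (16 * Real.exp (u - 4)) :=
        mul_le_mul_of_nonneg_left h3 (Real.exp_pos _).le
    _ = 16 * Real.exp (-4) := by rw [← h4]; ring

lemma myf_deriv_bound (s : ℝ) : |deriv myf s| ≤ 16 * Real.exp (-4) := by
  have hcd : Continuous (deriv myf) :=
    (myf_contDiff (n := 2)).continuous_deriv (by norm_num)
  have hzero : ∀ x : ℝ, x < 0 ∨ 1 < x → deriv myf x = 0 := by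
    rintro x (hx | hx)
    · have hev : myf =ᶠ[nhds x] fun _ => 0 := by
        filter_upwards [IsOpen.mem_nhds isOpen_Iio hx] with y hy
        exact myf_zero_left (le_of_lt hy)
      rw [hev.deriv_eq, deriv_const]
    · have hev : myf =ᶠ[nhds x] fun _ => 0 := by
        filter_upwards [IsOpen.mem_nhds isOpen_Ioi hx] with y hy
        exact myf_zero_right (le_of_lt hy)
      rw [hev.deriv_eq, deriv_const]
  have hint : ∀ x ∈ Ioo (0:ℝ) 1, |deriv myf x| ≤ 16 * Real.exp (-4) := by
    rintro x ⟨h0, h1⟩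
    rw [(myf_hasDerivAt h0 h1).deriv]
    have h1' : 0 < 1 - x := by linarith
    have hpq : 0 < x * (1 - x) := mul_pos h0 h1'
    set u : ℝ := (x * (1 - x))⁻¹ with hu
    have hu4 : 4 ≤ u := by
      rw [hu, le_inv_comm₀ (by norm_num) hpq]
      nlinarith [sq_nonneg (x - 1/2)]
    have hdiff : x⁻¹ ^ 2 - (1 - x)⁻¹ ^ 2 = (1 - 2 * x) * u ^ 2 := by
      rw [hu]; field_simp; ring
    have hmyf : myf x = Real.exp (-u) := by
      rw [myf_eq h0 h1, hu, one_div]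
    rw [hdiff, hmyf, abs_mul, abs_mul, Real.abs_exp, abs_of_nonneg (sq_nonneg u)]
    have h12 : |1 - 2 * x| ≤ 1 := by
      rw [abs_le]; constructor <;> linarith
    calc Real.exp (-u) * (|1 - 2 * x| * u ^ 2)
        ≤ Real.exp (-u) * (1 * u ^ 2) := by
          apply mul_le_mul_of_nonneg_left _ (Real.exp_pos _).le
          apply mul_le_mul_of_nonneg_right h12 (sq_nonneg u)
      _ = Real.exp (-u) * u ^ 2 := by ring
      _ ≤ 16 * Real.exp (-4) := key_est hu4
  rcases lt_or_ge s 0 with hs | hs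
  · rw [hzero s (Or.inl hs)]; simp; positivity
  rcases lt_or_ge 1 s with hs1 | hs1
  · rw [hzero s (Or.inr hs1)]; simp; positivity
  have hSclosed : IsClosed {x : ℝ | |deriv myf x| ≤ 16 * Real.exp (-4)} :=
    isClosed_le hcd.abs continuous_const
  have hsub : Icc (0:ℝ) 1 ⊆ {x : ℝ | |deriv myf x| ≤ 16 * Real.exp (-4)} := by
    rw [← closure_Ioo (by norm_num : (0:ℝ) ≠ 1)]
    exact hSclosed.closure_subset_iff.2 hint
  exact hsub ⟨hs, hs1⟩

lemma myf_ge {x d : ℝ} (h0 : 0 < x) (h1 : x < 1) (hd : 0 < d) (hdx : d ≤ x * (1 - x)) :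
    Real.exp (-(1 / d)) ≤ myf x := by
  rw [myf_eq h0 h1]
  apply Real.exp_le_exp.2
  apply neg_le_neg
  exact one_div_le_one_div_of_le hd hdx

lemma rect {a b c : ℝ} (hab : a ≤ b) (h : ∀ x ∈ Icc a b, c ≤ myf x) :
    c * (b - a) ≤ ∫ s in a..b, myf s := by
  have := intervalIntegral.integral_mono_on hab (intervalIntegrable_const (μ := volume))
    (myf_cont.intervalIntegrable a b) h
  rwa [intervalIntegral.integral_const, smul_eq_mul, mul_comm] at this

lemma C0_lb :
    (1/5) * Real.exp (-(100/21)) + (1/10) * Real.exp (-(25/6)) + (1/10) * Real.exp (-(400/99))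
      ≤ ∫ s in (0:ℝ)..1, myf s := by
  have hii : ∀ a b : ℝ, IntervalIntegrable myf volume a b :=
    fun a b => myf_cont.intervalIntegrable a b
  have E : ∫ s in (0:ℝ)..1, myf s =
      (∫ s in (0:ℝ)..(3/10), myf s) + ((∫ s in (3/10:ℝ)..(2/5), myf s) +
      ((∫ s in (2/5:ℝ)..(9/20), myf s) + ((∫ s in (9/20:ℝ)..(11/20), myf s) +
      ((∫ s in (11/20:ℝ)..(3/5), myf s) + ((∫ s in (3/5:ℝ)..(7/10), myf s) +
      (∫ s in (7/10:ℝ)..1, myf s)))))) := by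
    rw [intervalIntegral.integral_add_adjacent_intervals (hii (3/5) (7/10)) (hii _ _),
      intervalIntegral.integral_add_adjacent_intervals (hii (11/20) (3/5)) (hii _ _),
      intervalIntegral.integral_add_adjacent_intervals (hii (9/20) (11/20)) (hii _ _),
      intervalIntegral.integral_add_adjacent_intervals (hii (2/5) (9/20)) (hii _ _),
      intervalIntegral.integral_add_adjacent_intervals (hii (3/10) (2/5)) (hii _ _),
      intervalIntegral.integral_add_adjacent_intervals (hii 0 (3/10)) (hii _ _)]
  have h0 : (0:ℝ) ≤ ∫ s in (0:ℝ)..(3/10), myf s :=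
    intervalIntegral.integral_nonneg (by norm_num) (fun x _ => myf_nonneg x)
  have h6 : (0:ℝ) ≤ ∫ s in (7/10:ℝ)..1, myf s :=
    intervalIntegral.integral_nonneg (by norm_num) (fun x _ => myf_nonneg x)
  have hd1 : (100:ℝ)/21 = 1/(21/100) := by norm_num
  have hd2 : (25:ℝ)/6 = 1/(6/25) := by norm_num
  have hd3 : (400:ℝ)/99 = 1/(99/400) := by norm_num
  have h1 : Real.exp (-(100/21)) * (2/5 - 3/10) ≤ ∫ s in (3/10:ℝ)..(2/5), myf s := by
    apply rect (by norm_num)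
    rintro x ⟨hx1, hx2⟩
    rw [hd1]
    exact myf_ge (by linarith) (by linarith) (by norm_num) (by nlinarith)
  have h5 : Real.exp (-(100/21)) * (7/10 - 3/5) ≤ ∫ s in (3/5:ℝ)..(7/10), myf s := by
    apply rect (by norm_num)
    rintro x ⟨hx1, hx2⟩
    rw [hd1]
    exact myf_ge (by linarith) (by linarith) (by norm_num) (by nlinarith)
  have h2 : Real.exp (-(25/6)) * (9/20 - 2/5) ≤ ∫ s in (2/5:ℝ)..(9/20), myf s := by
    apply rect (by norm_num)
    rintro x ⟨hx1, hx2⟩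
    rw [hd2]
    exact myf_ge (by linarith) (by linarith) (by norm_num) (by nlinarith)
  have h4 : Real.exp (-(25/6)) * (3/5 - 11/20) ≤ ∫ s in (11/20:ℝ)..(3/5), myf s := by
    apply rect (by norm_num)
    rintro x ⟨hx1, hx2⟩
    rw [hd2]
    exact myf_ge (by linarith) (by linarith) (by norm_num) (by nlinarith)
  have h3 : Real.exp (-(400/99)) * (11/20 - 9/20) ≤ ∫ s in (9/20:ℝ)..(11/20), myf s := by
    apply rect (by norm_num)
    rintro x ⟨hx1, hx2⟩
    rw [hd3]
    exact myf_ge (by linarith) (by linarith) (by norm_num) (by nlinarith)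
  rw [E]
  linarith

lemma exp_lb1 : (20/21:ℝ)^16 ≤ Real.exp (-(16/21)) := by
  have h : (20/21:ℝ) ≤ Real.exp (-(1/21)) := by
    have := Real.add_one_le_exp (-(1/21:ℝ)); linarith
  calc (20/21:ℝ)^16 ≤ Real.exp (-(1/21)) ^ 16 := by
        apply pow_le_pow_left₀ (by norm_num) h
    _ = Real.exp (-(16/21)) := by
        rw [← Real.exp_nat_mul]; norm_num

lemma exp_lb2 : (47/48:ℝ)^8 ≤ Real.exp (-(1/6)) := by
  have h : (47/48:ℝ) ≤ Real.exp (-(1/48)) := by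
    have := Real.add_one_le_exp (-(1/48:ℝ)); linarith
  calc (47/48:ℝ)^8 ≤ Real.exp (-(1/48)) ^ 8 := by
        apply pow_le_pow_left₀ (by norm_num) h
    _ = Real.exp (-(1/6)) := by
        rw [← Real.exp_nat_mul]; norm_num

lemma exp_lb3 : (95/99:ℝ) ≤ Real.exp (-(4/99)) := by
  have := Real.add_one_le_exp (-(4/99:ℝ)); linarith

lemma C0_bounds :
    Real.exp (-4) ≤ 4 * (∫ s in (0:ℝ)..1, myf s) ∧
    16 * Real.exp (-4) ≤ 60 * (∫ s in (0:ℝ)..1, myf s) := by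
  have hS := C0_lb
  have e1 : Real.exp (-(100/21:ℝ)) = Real.exp (-4) * Real.exp (-(16/21)) := by
    rw [← Real.exp_add]; norm_num
  have e2 : Real.exp (-(25/6:ℝ)) = Real.exp (-4) * Real.exp (-(1/6)) := by
    rw [← Real.exp_add]; norm_num
  have e3 : Real.exp (-(400/99:ℝ)) = Real.exp (-4) * Real.exp (-(4/99)) := by
    rw [← Real.exp_add]; norm_num
  have hp := (Real.exp_pos (-4:ℝ)).le
  have t1 : Real.exp (-4) * (20/21:ℝ)^16 ≤ Real.exp (-(100/21:ℝ)) := by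
    rw [e1]; exact mul_le_mul_of_nonneg_left exp_lb1 hp
  have t2 : Real.exp (-4) * (47/48:ℝ)^8 ≤ Real.exp (-(25/6:ℝ)) := by
    rw [e2]; exact mul_le_mul_of_nonneg_left exp_lb2 hp
  have t3 : Real.exp (-4) * (95/99:ℝ) ≤ Real.exp (-(400/99:ℝ)) := by
    rw [e3]; exact mul_le_mul_of_nonneg_left exp_lb3 hp
  have hq1 : (1:ℝ) ≤ 4/5*(20/21:ℝ)^16 + 2/5*(47/48:ℝ)^8 + 2/5*(95/99) := by norm_num
  have hq2 : (16:ℝ) ≤ 12*(20/21:ℝ)^16 + 6*(47/48:ℝ)^8 + 6*(95/99) := by norm_num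
  constructor
  · nlinarith [t1, t2, t3, hS, hp, hq1]
  · nlinarith [t1, t2, t3, hS, hp, hq2]

theorem stmt_11 :
    let C : ℝ := ∫ s in (0:ℝ)..1, Real.exp (-(1 / (s * (1 - s))))
    let Γ : ℝ → ℝ := fun t =>
      if t ≤ 0 then 0
      else if t < 1 then (∫ s in (0:ℝ)..t, Real.exp (-(1 / (s * (1 - s))))) / C
      else 1
    ContDiff ℝ 2 Γ ∧ (∀ t : ℝ, |deriv Γ t| ≤ 4) ∧ (∀ t : ℝ, |deriv (deriv Γ) t| ≤ 60) := by
  intro C Γ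
  set C0 : ℝ := ∫ s in (0:ℝ)..1, myf s with hC0def
  have hC0pos : 0 < C0 := by
    refine lt_of_lt_of_le ?_ C0_lb
    positivity
  have hae1 : ∀ᵐ s : ℝ, s ≠ 1 := by
    refine MeasureTheory.compl_mem_ae_iff.2 ?_
    exact measure_singleton 1
  have hCC0 : C = C0 := by
    refine intervalIntegral.integral_congr_ae ?_
    filter_upwards [hae1] with s hs hmem
    rw [Set.uIoc_of_le (by norm_num : (0:ℝ) ≤ 1)] at hmem
    exact (myf_eq hmem.1 (lt_of_le_of_ne hmem.2 hs)).symm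
  have hΓ : Γ = fun t => (∫ s in (0:ℝ)..t, myf s) / C0 := by
    funext t
    show (if t ≤ 0 then 0
      else if t < 1 then (∫ s in (0:ℝ)..t, Real.exp (-(1 / (s * (1 - s))))) / C
      else 1) = (∫ s in (0:ℝ)..t, myf s) / C0
    by_cases ht : t ≤ 0
    · rw [if_pos ht]
      have : ∫ s in (0:ℝ)..t, myf s = ∫ s in (0:ℝ)..t, (0:ℝ) := by
        refine intervalIntegral.integral_congr ?_
        intro x hx
        rw [Set.uIcc_of_ge ht] at hx
        exact myf_zero_left (hx.2)
      rw [this]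
      simp
    · rw [if_neg ht]
      push_neg at ht
      by_cases ht1 : t < 1
      · rw [if_pos ht1, hCC0]
        congr 1
        refine intervalIntegral.integral_congr_ae ?_
        refine Filter.Eventually.of_forall ?_
        intro s hs
        rw [Set.uIoc_of_le ht.le] at hs
        exact (myf_eq hs.1 (lt_of_le_of_lt hs.2 ht1)).symm
      · rw [if_neg ht1]
        push_neg at ht1
        have hsplit : ∫ s in (0:ℝ)..t, myf s = C0 + ∫ s in (1:ℝ)..t, myf s := by
          rw [hC0def, intervalIntegral.integral_add_adjacent_intervals
            (myf_cont.intervalIntegrable 0 1) (myf_cont.intervalIntegrable 1 t)]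
        have hz : ∫ s in (1:ℝ)..t, myf s = 0 := by
          have : ∫ s in (1:ℝ)..t, myf s = ∫ s in (1:ℝ)..t, (0:ℝ) := by
            refine intervalIntegral.integral_congr ?_
            intro x hx
            rw [Set.uIcc_of_le ht1] at hx
            exact myf_zero_right hx.1
          rw [this]; simp
        rw [hsplit, hz, add_zero, div_self hC0pos.ne']
  have hder : ∀ t : ℝ, HasDerivAt (fun t => (∫ s in (0:ℝ)..t, myf s) / C0) (myf t / C0) t :=
    fun t => ((myf_cont.integral_hasStrictDerivAt 0 t).hasDerivAt).div_const C0
  have hderivΓ : deriv Γ = fun t => myf t / C0 := by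
    funext t
    rw [hΓ]
    exact (hder t).deriv
  refine ⟨?_, ?_, ?_⟩
  · rw [hΓ]
    have h2 : (2 : WithTop ℕ∞) = 1 + 1 := by norm_num
    rw [h2, contDiff_succ_iff_deriv]
    refine ⟨fun t => (hder t).differentiableAt, by simp, ?_⟩
    have : deriv (fun t => (∫ s in (0:ℝ)..t, myf s) / C0) = fun t => myf t / C0 :=
      funext fun t => (hder t).deriv
    rw [this]
    exact (myf_contDiff (n := 1)).div_const _
  · intro t
    rw [hderivΓ]
    have h1 : |myf t / C0| = myf t / C0 :=
      abs_of_nonneg (div_nonneg (myf_nonneg t) hC0pos.le)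
    rw [h1, div_le_iff₀ hC0pos]
    calc myf t ≤ Real.exp (-4) := myf_le t
      _ ≤ 4 * C0 := C0_bounds.1
  · intro t
    rw [hderivΓ]
    have : deriv (fun t => myf t / C0) t = deriv myf t / C0 := deriv_div_const _
    rw [this, abs_div, abs_of_pos hC0pos, div_le_iff₀ hC0pos]
    calc |deriv myf t| ≤ 16 * Real.exp (-4) := myf_deriv_bound t
      _ ≤ 60 * C0 := C0_bounds.2
end

section
/- The function x ↦ (c/2)·max{0, ‖x‖ − b/2}² on ℝ^d (with c, b > 0) is convex and c-smooth everywhere, and is (c/2)-strongly convex on the set {x : ‖x‖ ≥ b}. -/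
open Real RealInnerProductSpace
variable {E : Type*} [NormedAddCommGroup E] [InnerProductSpace ℝ E]

theorem hasFDerivAt_norm' (x : E) (hx : x ≠ 0) :
    HasFDerivAt (fun y : E => ‖y‖) (‖x‖⁻¹ • innerSL ℝ x) x := by
  have h1 : HasFDerivAt (fun y : E => ‖y‖ ^ 2) (2 • (innerSL ℝ x)) x := by
    simpa using (hasFDerivAt_id x).norm_sq
  have h2 : HasDerivAt Real.sqrt (1 / (2 * Real.sqrt (‖x‖ ^ 2))) (‖x‖ ^ 2) :=
    Real.hasDerivAt_sqrt (pow_ne_zero 2 (norm_ne_zero_iff.2 hx))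
  have h3 := h2.comp_hasFDerivAt x h1
  have h4 : (Real.sqrt ∘ fun y : E => ‖y‖ ^ 2) = fun y : E => ‖y‖ := by
    funext y; simp [Real.sqrt_sq (norm_nonneg y)]
  rw [h4] at h3
  refine h3.congr_fderiv (Eq.symm ?_)
  rw [Real.sqrt_sq (norm_nonneg x)]
  ext u
  simp only [ContinuousLinearMap.coe_smul', Pi.smul_apply, smul_eq_mul,
    ContinuousLinearMap.smul_apply, nsmul_eq_mul]
  have : ‖x‖ ≠ 0 := norm_ne_zero_iff.2 hx
  field_simp
  ring

theorem hasGradientAt_of_innerSL {f : E → ℝ} {g x : E} [CompleteSpace E]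
    (h : HasFDerivAt f (innerSL ℝ g) x) : HasGradientAt f g x := by
  rw [hasGradientAt_iff_hasFDerivAt]
  refine h.congr_fderiv ?_
  ext v; rfl

theorem hasGradientAt_aux (c r : ℝ) (hr : 0 < r) (x : E) [CompleteSpace E] :
    HasGradientAt (fun y : E => (c/2) * max 0 (‖y‖ - r) ^ 2)
      ((c * max 0 (‖x‖ - r) * ‖x‖⁻¹) • x) x := by
  rcases le_or_gt ‖x‖ r with hx | hx
  · -- gradient is 0 here
    have hmax : max 0 (‖x‖ - r) = 0 := max_eq_left (by linarith)
    rw [hmax]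
    simp only [mul_zero, zero_mul, zero_smul]
    apply hasGradientAt_of_innerSL
    rw [map_zero, hasFDerivAt_iff_isLittleO_nhds_zero]
    have hfx : (c/2) * max 0 (‖x‖ - r) ^ 2 = 0 := by rw [hmax]; ring
    have hbound : ∀ h : E, |(c/2) * max 0 (‖x + h‖ - r) ^ 2 - (c/2) * max 0 (‖x‖ - r) ^ 2
        - (0 : E →L[ℝ] ℝ) h| ≤ |c/2| * ‖h‖ ^ 2 := by
      intro h
      have h1 : max 0 (‖x + h‖ - r) ≤ ‖h‖ := by
        rcases le_or_gt (‖x + h‖) r with h2 | h2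
        · simpa [max_eq_left (by linarith : ‖x + h‖ - r ≤ 0)] using norm_nonneg h
        · rw [max_eq_right (by linarith)]
          have := norm_le_insert' x (x + h)  -- maybe wrong name
          calc ‖x + h‖ - r ≤ ‖x + h‖ - ‖x‖ := by linarith
            _ ≤ ‖(x + h) - x‖ := norm_sub_norm_le _ _
            _ = ‖h‖ := by simp
      have h0 : (0:ℝ) ≤ max 0 (‖x + h‖ - r) := le_max_left _ _
      rw [hfx]
      simp only [ContinuousLinearMap.zero_apply, sub_zero, zero_pow, mul_zero]
      rw [abs_mul, abs_of_nonneg (by positivity : (0:ℝ) ≤ max 0 (‖x + h‖ - r) ^ 2)]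
      exact mul_le_mul_of_nonneg_left (pow_le_pow_left₀ h0 h1 2) (abs_nonneg _)
    -- now conclude littleO
    have hO : (fun h : E => (c/2) * max 0 (‖x + h‖ - r) ^ 2 - (c/2) * max 0 (‖x‖ - r) ^ 2
        - (0 : E →L[ℝ] ℝ) h) =O[nhds 0] (fun h : E => ‖h‖ ^ 2) := by
      apply Asymptotics.IsBigO.of_bound (|c/2|)
      filter_upwards with h
      simpa [abs_of_nonneg (sq_nonneg ‖h‖)] using hbound h
    refine hO.trans_isLittleO ?_
    rw [Asymptotics.isLittleO_iff]
    intro ε hε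
    filter_upwards [Metric.closedBall_mem_nhds (0:E) hε] with h hh
    rw [Metric.mem_closedBall, dist_zero_right] at hh
    have : ‖h‖ ^ 2 ≤ ε * ‖h‖ := by nlinarith [norm_nonneg h]
    simpa [abs_of_nonneg (sq_nonneg ‖h‖)] using this
  · have hx0 : x ≠ 0 := fun h => by simp [h] at hx; linarith
    have hmax : max 0 (‖x‖ - r) = ‖x‖ - r := max_eq_right (by linarith)
    apply hasGradientAt_of_innerSL
    have hn := hasFDerivAt_norm' x hx0
    have hφ : HasDerivAt (fun t : ℝ => (c/2) * (t - r)^2) (c * (‖x‖ - r)) ‖x‖ := by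
      have h5 : HasDerivAt (fun t : ℝ => (c/2) * (t - r)^2)
          ((c/2) * ((2:ℕ) * (‖x‖ - r) ^ 1 * 1)) ‖x‖ :=
        (((hasDerivAt_id ‖x‖).sub_const r).pow 2).const_mul (c/2)
      convert h5 using 1; ring
    have hF := hφ.comp_hasFDerivAt x hn
    have hopen : {y : E | r < ‖y‖} ∈ nhds x :=
      (isOpen_lt continuous_const continuous_norm).mem_nhds hx
    have heq : (fun y : E => (c/2) * (‖y‖ - r)^2) =ᶠ[nhds x]
        (fun y : E => (c/2) * max 0 (‖y‖ - r) ^ 2) := by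
      filter_upwards [hopen] with y hy
      rw [max_eq_right (by exact le_of_lt (sub_pos.2 hy))]
    have hF2 := hF.congr_of_eventuallyEq heq.symm
    refine hF2.congr_fderiv (Eq.symm ?_)
    ext u
    simp only [innerSL_apply_apply, ContinuousLinearMap.coe_smul', Pi.smul_apply, innerSL_apply_apply,
      smul_eq_mul, ContinuousLinearMap.smul_apply]
    rw [hmax, real_inner_smul_left]
    ring

lemma scalar_ineq (a a' r s X Y : ℝ) (hr : 0 < r) (ha : r < a) (ha' : r < a')
    (hs : s ≤ a * a') (hX : X * a = a - r) (hY : Y * a' = a' - r) :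
    X^2*a^2 - 2*X*Y*s + Y^2*a'^2 ≤ a^2 - 2*s + a'^2 := by
  have ha0 : 0 < a := hr.trans ha
  have ha0' : 0 < a' := hr.trans ha'
  have hX2 : (X*a)^2 = (a-r)^2 := by rw [hX]
  have hY2 : (Y*a')^2 = (a'-r)^2 := by rw [hY]
  have hXY1 : X*Y*(a*a') = (a-r)*(a'-r) := by
    rw [show X*Y*(a*a') = (X*a)*(Y*a') from by ring, hX, hY]
  have h1XY : 0 ≤ 1 - X*Y := by nlinarith [hXY1, mul_pos ha0 ha0']
  have h4 : 0 ≤ (a*a' - s)*(1 - X*Y) := mul_nonneg (by linarith) h1XY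
  nlinarith [h4, hXY1, hX2, hY2]

lemma P_norm (r : ℝ) (z : E) (hz : z ≠ 0) :
    ‖(max 0 (‖z‖ - r) * ‖z‖⁻¹) • z‖ = max 0 (‖z‖ - r) := by
  rw [norm_smul]
  have hz0 : ‖z‖ ≠ 0 := norm_ne_zero_iff.2 hz
  rw [Real.norm_eq_abs, abs_of_nonneg (by positivity : (0:ℝ) ≤ max 0 (‖z‖ - r) * ‖z‖⁻¹)]
  field_simp

lemma P_lip (r : ℝ) (hr : 0 < r) (x y : E) :
    ‖(max 0 (‖x‖ - r) * ‖x‖⁻¹) • x - (max 0 (‖y‖ - r) * ‖y‖⁻¹) • y‖ ≤ ‖x - y‖ := by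
  have key : ∀ x y : E, ‖x‖ ≤ r → r < ‖y‖ →
      ‖(max 0 (‖x‖ - r) * ‖x‖⁻¹) • x - (max 0 (‖y‖ - r) * ‖y‖⁻¹) • y‖ ≤ ‖x - y‖ := by
    intro x y hx hy
    have hy0 : y ≠ 0 := fun h => by simp [h] at hy; linarith
    rw [max_eq_left (by linarith : ‖x‖ - r ≤ 0)]
    simp only [zero_mul, zero_smul, zero_sub, norm_neg]
    rw [P_norm r y hy0, max_eq_right (by linarith : (0:ℝ) ≤ ‖y‖ - r)]
    calc ‖y‖ - r ≤ ‖y‖ - ‖x‖ := by linarith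
      _ ≤ ‖y - x‖ := norm_sub_norm_le _ _
      _ = ‖x - y‖ := norm_sub_rev _ _
  rcases le_or_gt ‖x‖ r with hx | hx <;> rcases le_or_gt ‖y‖ r with hy | hy
  · rw [max_eq_left (by linarith : ‖x‖ - r ≤ 0), max_eq_left (by linarith : ‖y‖ - r ≤ 0)]
    simp [norm_nonneg]
  · exact key x y hx hy
  · rw [norm_sub_rev, norm_sub_rev x y]; exact key y x hy hx
  · -- both outside
    have hx0 : x ≠ 0 := fun h => by simp [h] at hx; linarith
    have hy0 : y ≠ 0 := fun h => by simp [h] at hy; linarith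
    rw [max_eq_right (by linarith : (0:ℝ) ≤ ‖x‖ - r),
       max_eq_right (by linarith : (0:ℝ) ≤ ‖y‖ - r)]
    rw [← Real.sqrt_sq (norm_nonneg (_ - _)), ← Real.sqrt_sq (norm_nonneg (x - y))]
    apply Real.sqrt_le_sqrt
    rw [norm_sub_sq_real, norm_sub_sq_real, norm_smul, norm_smul,
      real_inner_smul_left, real_inner_smul_right, Real.norm_eq_abs, Real.norm_eq_abs]
    have hxn : ‖x‖ ≠ 0 := norm_ne_zero_iff.2 hx0
    have hyn : ‖y‖ ≠ 0 := norm_ne_zero_iff.2 hy0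
    rw [abs_of_nonneg (mul_nonneg (by linarith) (inv_nonneg.2 (norm_nonneg x))),
        abs_of_nonneg (mul_nonneg (by linarith) (inv_nonneg.2 (norm_nonneg y)))]
    have eX : ((‖x‖ - r) * ‖x‖⁻¹) * ‖x‖ = ‖x‖ - r := by field_simp
    have eY : ((‖y‖ - r) * ‖y‖⁻¹) * ‖y‖ = ‖y‖ - r := by field_simp
    have key2 := scalar_ineq ‖x‖ ‖y‖ r (inner ℝ x y : ℝ) ((‖x‖ - r) * ‖x‖⁻¹) ((‖y‖ - r) * ‖y‖⁻¹)
      hr hx hy (real_inner_le_norm x y) eX eY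
    nlinarith [key2]

theorem convex_aux (c r : ℝ) (hc : 0 < c) :
    ConvexOn ℝ Set.univ (fun x : E => (c/2) * max 0 (‖x‖ - r) ^ 2) := by
  have h1 : ConvexOn ℝ Set.univ (fun x : E => ‖x‖ - r) := by
    have := convexOn_univ_norm (E := E)
    exact this.sub (concaveOn_const r convex_univ)
  have h0 : ConvexOn ℝ Set.univ (fun _ : E => (0:ℝ)) := convexOn_const 0 convex_univ
  have hg : ConvexOn ℝ Set.univ ((fun _ : E => (0:ℝ)) ⊔ (fun x : E => ‖x‖ - r)) := h0.sup h1
  refine ⟨convex_univ, fun x _ y _ a b ha hb hab => ?_⟩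
  have hmax := hg.2 (Set.mem_univ x) (Set.mem_univ y) ha hb hab
  simp only [Pi.sup_apply, smul_eq_mul] at hmax ⊢
  have h2 : (0:ℝ) ⊔ (‖x‖ - r) = max 0 (‖x‖ - r) := rfl
  have hmx : (0:ℝ) ≤ max 0 (‖x‖ - r) := le_max_left _ _
  have hmy : (0:ℝ) ≤ max 0 (‖y‖ - r) := le_max_left _ _
  have hmz : (0:ℝ) ≤ max 0 (‖a • x + b • y‖ - r) := le_max_left _ _
  set mx := max 0 (‖x‖ - r)
  set my := max 0 (‖y‖ - r)
  set mz := max 0 (‖a • x + b • y‖ - r)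
  have hA : mz * mz ≤ (a * mx + b * my) * (a * mx + b * my) :=
    mul_le_mul hmax hmax hmz (by positivity)
  have hB : (a * mx + b * my) * (a * mx + b * my) ≤ a * mx^2 + b * my^2 := by
    nlinarith [mul_nonneg (mul_nonneg ha hb) (sq_nonneg (mx - my))]
  have hC : mz^2 ≤ a * mx^2 + b * my^2 := by nlinarith [hA, hB]
  have := mul_le_mul_of_nonneg_left hC (le_of_lt (half_pos hc))
  nlinarith [this]

theorem snd_deriv (c r : ℝ) (hc : 0 < c) (hr : 0 < r) (x u : E) [CompleteSpace E]
    (hx : 2*r ≤ ‖x‖) :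
    (c/2) * ‖u‖^2 ≤ iteratedFDeriv ℝ 2 (fun y : E => (c/2) * max 0 (‖y‖ - r)^2) x ![u, u] := by
  set f := fun y : E => (c/2) * max 0 (‖y‖ - r)^2 with hf
  have hx0 : x ≠ 0 := by
    intro h; rw [h, norm_zero] at hx; linarith
  have hxa : 0 < ‖x‖ := by linarith
  have hxn : ‖x‖ ≠ 0 := ne_of_gt hxa
  set N := ‖x‖⁻¹ • innerSL ℝ x with hN
  have hnorm := hasFDerivAt_norm' x hx0
  -- first derivative eventually
  have hopen : {y : E | r < ‖y‖} ∈ nhds x :=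
    (isOpen_lt continuous_const continuous_norm).mem_nhds (by simp; linarith)
  have hev : fderiv ℝ f =ᶠ[nhds x]
      (fun y => innerSL ℝ ((c * max 0 (‖y‖ - r) * ‖y‖⁻¹) • y)) := by
    filter_upwards [hopen] with y _
    have h1 := (hasGradientAt_aux c r hr y).hasFDerivAt.fderiv
    rw [h1]; rfl
  -- derivative of G
  have h1 : HasFDerivAt (fun y : E => c * (‖y‖ - r)) (c • N) x :=
    (hnorm.sub_const r).const_mul c
  have h2 : HasFDerivAt (fun y : E => ‖y‖⁻¹) ((-(‖x‖^2)⁻¹) • N) x :=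
    (hasDerivAt_inv hxn).comp_hasFDerivAt x hnorm
  have h3 : HasFDerivAt (fun y : E => c * (‖y‖ - r) * ‖y‖⁻¹)
      ((c * (‖x‖ - r)) • ((-(‖x‖^2)⁻¹) • N) + ‖x‖⁻¹ • (c • N)) x := h1.mul h2
  set s' := (c * (‖x‖ - r)) • ((-(‖x‖^2)⁻¹) • N) + ‖x‖⁻¹ • (c • N) with hs'
  have h4 : HasFDerivAt (fun y : E => (c * (‖y‖ - r) * ‖y‖⁻¹) • y)
      ((c * (‖x‖ - r) * ‖x‖⁻¹) • ContinuousLinearMap.id ℝ E + s'.smulRight x) x :=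
    h3.smul (hasFDerivAt_id x)
  set D := (c * (‖x‖ - r) * ‖x‖⁻¹) • ContinuousLinearMap.id ℝ E + s'.smulRight x with hD
  have h5 : HasFDerivAt (fun y : E => innerSL ℝ ((c * (‖y‖ - r) * ‖y‖⁻¹) • y))
      ((innerSL ℝ (E := E)).comp D) x := (innerSL ℝ (E := E)).hasFDerivAt.comp x h4
  have h6 : HasFDerivAt (fun y : E => innerSL ℝ ((c * max 0 (‖y‖ - r) * ‖y‖⁻¹) • y))
      ((innerSL ℝ (E := E)).comp D) x := by
    apply h5.congr_of_eventuallyEq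
    filter_upwards [hopen] with y hy
    rw [max_eq_right (le_of_lt (sub_pos.2 hy))]
  have h7 : fderiv ℝ (fderiv ℝ f) x = (innerSL ℝ (E := E)).comp D := by
    rw [hev.fderiv_eq, h6.fderiv]
  rw [iteratedFDeriv_two_apply, h7]
  simp only [Matrix.cons_val_zero, Matrix.cons_val_one, Matrix.head_cons]
  simp only [hD, hs', hN, ContinuousLinearMap.comp_apply, ContinuousLinearMap.add_apply,
    ContinuousLinearMap.smul_apply, ContinuousLinearMap.id_apply,
    ContinuousLinearMap.smulRight_apply, innerSL_apply_apply, inner_add_left, inner_smul_left,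
    real_inner_smul_left, smul_eq_mul, RCLike.inner_apply, conj_trivial]
  have hiu : (inner ℝ u u : ℝ) = ‖u‖^2 := real_inner_self_eq_norm_sq u
  rw [hiu]
  have hRHS : c * (‖x‖ - r) * ‖x‖⁻¹ * ‖u‖^2 +
      (c * (‖x‖ - r) * (-(‖x‖^2)⁻¹ * (‖x‖⁻¹ * (inner ℝ x u : ℝ)))
        + ‖x‖⁻¹ * (c * (‖x‖⁻¹ * (inner ℝ x u : ℝ)))) * (inner ℝ x u : ℝ)
      = c * (‖x‖ - r) * ‖x‖⁻¹ * ‖u‖^2 + c * r * (‖x‖⁻¹)^3 * (inner ℝ x u : ℝ)^2 := by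
    field_simp
    ring
  rw [hRHS]
  have h9 : 1/2 ≤ (‖x‖ - r)/‖x‖ := by rw [le_div_iff₀ hxa]; linarith
  have h8 : c/2 ≤ c * (‖x‖ - r) * ‖x‖⁻¹ := by
    calc c/2 = c * (1/2) := by ring
      _ ≤ c * ((‖x‖ - r)/‖x‖) := mul_le_mul_of_nonneg_left h9 hc.le
      _ = c * (‖x‖ - r) * ‖x‖⁻¹ := by rw [div_eq_mul_inv]; ring
  calc c/2 * ‖u‖^2 ≤ c * (‖x‖ - r) * ‖x‖⁻¹ * ‖u‖^2 :=
        mul_le_mul_of_nonneg_right h8 (sq_nonneg _)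
    _ ≤ _ := le_add_of_nonneg_right (mul_nonneg (mul_nonneg (mul_nonneg hc.le hr.le)
        (pow_nonneg (inv_nonneg.2 (norm_nonneg x)) 3)) (sq_nonneg _))

theorem stmt_14 (d : ℕ) (c b : ℝ) (hc : 0 < c) (hb : 0 < b) :
    let f : EuclideanSpace ℝ (Fin d) → ℝ := fun x => (c / 2) * max 0 (‖x‖ - b / 2) ^ 2
    ConvexOn ℝ Set.univ f ∧
    (∀ x y : EuclideanSpace ℝ (Fin d), ‖gradient f x - gradient f y‖ ≤ c * ‖x - y‖) ∧
    (∀ x u : EuclideanSpace ℝ (Fin d), b ≤ ‖x‖ →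
      (c / 2) * ‖u‖ ^ 2 ≤ iteratedFDeriv ℝ 2 f x ![u, u]) := by
  intro f
  have hr : 0 < b/2 := half_pos hb
  refine ⟨convex_aux c (b/2) hc, ?_, ?_⟩
  · intro x y
    have hgx := (hasGradientAt_aux (E := EuclideanSpace ℝ (Fin d)) c (b/2) hr x).gradient
    have hgy := (hasGradientAt_aux (E := EuclideanSpace ℝ (Fin d)) c (b/2) hr y).gradient
    show ‖gradient (fun x : EuclideanSpace ℝ (Fin d) => (c/2) * max 0 (‖x‖ - b/2) ^ 2) x -
      gradient (fun x : EuclideanSpace ℝ (Fin d) => (c/2) * max 0 (‖x‖ - b/2) ^ 2) y‖ ≤ c * ‖x - y‖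
    rw [hgx, hgy]
    have h1 : (c * max 0 (‖x‖ - b/2) * ‖x‖⁻¹) • x - (c * max 0 (‖y‖ - b/2) * ‖y‖⁻¹) • y
        = c • ((max 0 (‖x‖ - b/2) * ‖x‖⁻¹) • x - (max 0 (‖y‖ - b/2) * ‖y‖⁻¹) • y) := by
      rw [smul_sub, smul_smul, smul_smul]
      ring_nf
    rw [h1, norm_smul, Real.norm_eq_abs, abs_of_pos hc]
    exact mul_le_mul_of_nonneg_left (P_lip (b/2) hr x y) hc.le
  · intro x u hx
    exact snd_deriv c (b/2) hc hr x u (by linarith)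
end

section
/- Let X₁,…,X_M be independent Binomial(K, p) random variables with M ≥ 2, K ≥ 1, and 0 < p ≤ 1. Then E[max_{1≤m≤M} X_m] ≤ 2Kp + 3·log M + 3. -/
open MeasureTheory ProbabilityTheory
open scoped ENNReal

lemma aux_lintegral_nat {Ω : Type*} [MeasurableSpace Ω] (μ : Measure Ω)
    (f : Ω → ℕ) (hf : Measurable f) :
    ∫⁻ ω, (f ω : ℝ≥0∞) ∂μ = ∑' n : ℕ, μ {ω | n < f ω} := by
  have h1 : ∀ ω, (f ω : ℝ≥0∞)
      = ∑' n : ℕ, Set.indicator {ω | n < f ω} (fun _ => (1:ℝ≥0∞)) ω := by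
    intro ω
    have e0 : ∀ n ∉ Finset.range (f ω),
        Set.indicator {ω | n < f ω} (fun _ => (1:ℝ≥0∞)) ω = 0 := by
      intro n hn
      simp only [Finset.mem_range, not_lt] at hn
      simp [Set.indicator_apply, Nat.not_lt.mpr hn]
    have e1 : ∀ n ∈ Finset.range (f ω),
        Set.indicator {ω | n < f ω} (fun _ => (1:ℝ≥0∞)) ω = 1 := by
      intro n hn
      simp only [Finset.mem_range] at hn
      simp [Set.indicator_apply, hn]
    rw [tsum_eq_sum e0, Finset.sum_congr rfl e1, Finset.sum_const, Finset.card_range]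
    simp
  calc ∫⁻ ω, (f ω : ℝ≥0∞) ∂μ
      = ∫⁻ ω, ∑' n : ℕ, Set.indicator {ω | n < f ω} (fun _ => (1:ℝ≥0∞)) ω ∂μ := by
        simp_rw [h1]
    _ = ∑' n : ℕ, ∫⁻ ω, Set.indicator {ω | n < f ω} (fun _ => (1:ℝ≥0∞)) ω ∂μ :=
        lintegral_tsum (fun n => ((measurable_const.indicator
          (hf (MeasurableSet.of_discrete))).aemeasurable))
    _ = ∑' n : ℕ, μ {ω | n < f ω} := by
        refine tsum_congr fun n => ?_
        have hs : MeasurableSet {ω | n < f ω} := hf MeasurableSet.of_discrete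
        rw [lintegral_indicator hs]
        simp


lemma aux_binom_sum (p : ℝ≥0∞) (hp : p ≤ 1) (K : ℕ) :
    ∑ i : Fin (K+1), 2^(i:ℕ) * PMF.binomial p.toNNReal (by simpa using ENNReal.toNNReal_mono ENNReal.one_ne_top hp) K i = (1+p)^K := by
  have h1 : ∀ i : Fin (K+1), 2^(i:ℕ) * PMF.binomial p.toNNReal (by simpa using ENNReal.toNNReal_mono ENNReal.one_ne_top hp) K i
      = (2*p)^(i:ℕ) * (1-p)^(K-(i:ℕ)) * (K.choose (i:ℕ)) := by
    intro i
    have hpne : p ≠ ∞ := ne_top_of_le_ne_top ENNReal.one_ne_top hp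
    erw [PMF.binomial_apply]
    simp only [ENNReal.coe_mul, ENNReal.coe_pow, ENNReal.coe_sub, ENNReal.coe_one,
      ENNReal.coe_natCast, ENNReal.coe_toNNReal hpne]
    rw [Fin.val_last, mul_pow]
    ring
  rw [Finset.sum_congr rfl (fun i _ => h1 i),
    Fin.sum_univ_eq_sum_range (fun n => (2*p)^n * (1-p)^(K-n) * (K.choose n)) (K+1),
    ← add_pow]
  congr 1
  rw [two_mul, add_assoc, add_tsub_cancel_of_le hp, add_comm p 1]

lemma aux_tail (p : ℝ≥0∞) (hp : p ≤ 1) (K t : ℕ) :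
    ((PMF.binomial p.toNNReal (by simpa using ENNReal.toNNReal_mono ENNReal.one_ne_top hp) K).map Fin.val).toMeasure {n : ℕ | t ≤ n} ≤ (1+p)^K * 2⁻¹^t := by
  rw [PMF.toMeasure_map_apply _ _ _ (measurable_of_countable _) MeasurableSet.of_discrete]
  have hpre : (Fin.val ⁻¹' {n : ℕ | t ≤ n} : Set (Fin (K+1))) = {i : Fin (K+1) | t ≤ (i:ℕ)} := rfl
  rw [hpre, PMF.toMeasure_apply_fintype]
  have hb : ∀ i : Fin (K+1),
      ({i : Fin (K+1) | t ≤ (i:ℕ)}).indicator (PMF.binomial p.toNNReal (by simpa using ENNReal.toNNReal_mono ENNReal.one_ne_top hp) K) i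
        ≤ 2⁻¹^t * (2^(i:ℕ) * PMF.binomial p.toNNReal (by simpa using ENNReal.toNNReal_mono ENNReal.one_ne_top hp) K i) := by
    intro i
    by_cases h : t ≤ (i:ℕ)
    · rw [Set.indicator_of_mem (show i ∈ {i : Fin (K+1) | t ≤ (i:ℕ)} from h)]
      have h2 : (1:ℝ≥0∞) ≤ 2⁻¹^t * 2^(i:ℕ) := by
        have : (2:ℝ≥0∞)^(i:ℕ) = 2^t * 2^((i:ℕ)-t) := by
          rw [← pow_add, Nat.add_sub_cancel' h]
        rw [this, ← mul_assoc, ← mul_pow, ENNReal.inv_mul_cancel two_ne_zero ENNReal.ofNat_ne_top,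
          one_pow, one_mul]
        exact one_le_pow_of_one_le' one_le_two _
      calc PMF.binomial p.toNNReal (by simpa using ENNReal.toNNReal_mono ENNReal.one_ne_top hp) K i = 1 * PMF.binomial p.toNNReal (by simpa using ENNReal.toNNReal_mono ENNReal.one_ne_top hp) K i := (one_mul _).symm
        _ ≤ (2⁻¹^t * 2^(i:ℕ)) * PMF.binomial p.toNNReal (by simpa using ENNReal.toNNReal_mono ENNReal.one_ne_top hp) K i := by
            exact mul_le_mul_left h2 _
        _ = 2⁻¹^t * (2^(i:ℕ) * PMF.binomial p.toNNReal (by simpa using ENNReal.toNNReal_mono ENNReal.one_ne_top hp) K i) := by rw [mul_assoc]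
    · rw [Set.indicator_of_notMem (show i ∉ {i : Fin (K+1) | t ≤ (i:ℕ)} from h)]
      exact zero_le
  calc ∑ i : Fin (K+1), ({i : Fin (K+1) | t ≤ (i:ℕ)}).indicator (PMF.binomial p.toNNReal (by simpa using ENNReal.toNNReal_mono ENNReal.one_ne_top hp) K) i
      ≤ ∑ i : Fin (K+1), 2⁻¹^t * (2^(i:ℕ) * PMF.binomial p.toNNReal (by simpa using ENNReal.toNNReal_mono ENNReal.one_ne_top hp) K i) :=
        Finset.sum_le_sum (fun i _ => hb i)
    _ = 2⁻¹^t * ∑ i : Fin (K+1), 2^(i:ℕ) * PMF.binomial p.toNNReal (by simpa using ENNReal.toNNReal_mono ENNReal.one_ne_top hp) K i := by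
        rw [Finset.mul_sum]
    _ = (1+p)^K * 2⁻¹^t := by rw [aux_binom_sum p hp K, mul_comm]


lemma aux_split (g : ℕ → ℝ≥0∞) (a : ℕ) :
    ∑' n, g n = ∑ n ∈ Finset.range a, g n + ∑' n, g (n + a) := by
  induction a with
  | zero => simp
  | succ k ih =>
    rw [ih, Finset.sum_range_succ, add_assoc]
    congr 1
    rw [tsum_eq_zero_add' (f := fun n => g (n + k)) ENNReal.summable, zero_add]
    congr 1
    refine tsum_congr fun n => ?_
    congr 1
    omega

theorem stmt_16 {Ω : Type*} [MeasurableSpace Ω] (μ : Measure Ω) [IsProbabilityMeasure μ]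
    (M K : ℕ) (hM : 2 ≤ M) (hK : 1 ≤ K)
    (p : ℝ≥0∞) (hp : p ≤ 1) (hp0 : 0 < p)
    (X : Fin M → Ω → ℕ) (hmeas : ∀ m, Measurable (X m))
    (hindep : iIndepFun X μ)
    (hdist : ∀ m, μ.map (X m) = ((PMF.binomial p.toNNReal (by simpa using ENNReal.toNNReal_mono ENNReal.one_ne_top hp) K).map Fin.val).toMeasure) :
    ∫ ω, ((Finset.univ.sup fun m => X m ω : ℕ) : ℝ) ∂μ ≤
      2 * K * p.toReal + 3 * Real.log M + 3 := by
  classical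
  have hpne : p ≠ ∞ := (lt_of_le_of_lt hp ENNReal.one_lt_top).ne
  set p' : ℝ := p.toReal with hp'def
  have hp'0 : 0 ≤ p' := ENNReal.toReal_nonneg
  set f : Ω → ℕ := fun ω => Finset.univ.sup fun m => X m ω with hfdef
  have hne : (Finset.univ : Finset (Fin M)).Nonempty :=
    ⟨⟨0, by omega⟩, Finset.mem_univ _⟩
  have hfmeas : Measurable f := by
    have h1 : Measurable (Finset.univ.sup' hne X) :=
      Finset.measurable_sup' hne (fun m _ => hmeas m)
    have h2 : f = Finset.univ.sup' hne X := by
      funext ω; rw [Finset.sup'_apply, Finset.sup'_eq_sup]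
    rw [h2]; exact h1
  -- tail bound
  have tail : ∀ n : ℕ, μ {ω | n < f ω} ≤ (M:ℝ≥0∞) * ((1+p)^K * 2⁻¹^(n+1)) := by
    intro n
    have hset : {ω | n < f ω} = ⋃ m, {ω | n < X m ω} := by
      ext ω
      simp [hfdef, Finset.lt_sup_iff]
    have hm : ∀ m, μ {ω | n < X m ω} ≤ (1+p)^K * 2⁻¹^(n+1) := by
      intro m
      have h1 : μ {ω | n < X m ω} = (μ.map (X m)) {k : ℕ | n < k} := by
        rw [Measure.map_apply (hmeas m) MeasurableSet.of_discrete]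
        rfl
      have h2 : {k : ℕ | n < k} = {k : ℕ | n+1 ≤ k} := by
        ext k; simp only [Set.mem_setOf_eq]; omega
      rw [h1, hdist m, h2]
      exact aux_tail p hp K (n+1)
    calc μ {ω | n < f ω} ≤ ∑' m : Fin M, μ {ω | n < X m ω} := by
          rw [hset]; exact measure_iUnion_le _
      _ ≤ ∑' _ : Fin M, ((1+p)^K * 2⁻¹^(n+1)) := ENNReal.tsum_le_tsum hm
      _ = (M:ℝ≥0∞) * ((1+p)^K * 2⁻¹^(n+1)) := by
          rw [tsum_fintype]
          simp [Finset.sum_const, nsmul_eq_mul]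
  -- choice of threshold
  set a : ℕ := ⌈((K:ℝ) * p' + Real.log M) / Real.log 2⌉₊ with hadef
  have hl2 : (0:ℝ) < Real.log 2 := Real.log_pos one_lt_two
  have hM1 : (1:ℝ) ≤ (M:ℝ) := by exact_mod_cast Nat.one_le_of_lt hM
  have hlogM : 0 ≤ Real.log M := Real.log_nonneg hM1
  have harg0 : 0 ≤ ((K:ℝ) * p' + Real.log M) / Real.log 2 := by positivity
  have hA : (M:ℝ≥0∞) * (1+p)^K * 2⁻¹^a ≤ 1 := by
    have hfin : (M:ℝ≥0∞) * (1+p)^K ≠ ∞ := by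
      apply ENNReal.mul_ne_top (ENNReal.natCast_ne_top M)
      exact ENNReal.pow_ne_top (by simp [hpne])
    have h2 : (M:ℝ≥0∞) * (1+p)^K ≤ 2^a := by
      rw [← ENNReal.toReal_le_toReal hfin (by simp)]
      rw [ENNReal.toReal_mul, ENNReal.toReal_pow, ENNReal.toReal_add ENNReal.one_ne_top hpne]
      simp only [ENNReal.toReal_one, ENNReal.toReal_natCast, ENNReal.toReal_pow,
        ENNReal.toReal_ofNat]
      have hx : (K:ℝ)*p' + Real.log M ≤ (a:ℝ) * Real.log 2 := by
        have h := Nat.le_ceil (((K:ℝ) * p' + Real.log M) / Real.log 2)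
        rw [div_le_iff₀ hl2] at h
        exact h
      calc (M:ℝ) * (1+p')^K
          ≤ Real.exp (Real.log M) * Real.exp ((K:ℝ)*p') := by
            rw [Real.exp_log (by linarith)]
            apply mul_le_mul_of_nonneg_left _ (by linarith)
            calc (1+p')^K ≤ (Real.exp p')^K := by
                  apply pow_le_pow_left₀ (by linarith)
                  have := Real.add_one_le_exp p'
                  linarith
              _ = Real.exp ((K:ℝ)*p') := by rw [← Real.exp_nat_mul]
        _ = Real.exp (Real.log M + (K:ℝ)*p') := (Real.exp_add _ _).symm
        _ ≤ Real.exp ((a:ℝ) * Real.log 2) := Real.exp_le_exp.mpr (by linarith)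
        _ = 2^a := by rw [Real.exp_nat_mul, Real.exp_log two_pos]
    calc (M:ℝ≥0∞) * (1+p)^K * 2⁻¹^a ≤ 2^a * 2⁻¹^a := mul_le_mul_left h2 _
      _ = 1 := by
          rw [← mul_pow, ENNReal.mul_inv_cancel two_ne_zero ENNReal.ofNat_ne_top, one_pow]
  -- sum bound
  have geo : ∑' n : ℕ, (2⁻¹:ℝ≥0∞)^(n+1) = 1 := by
    simp_rw [pow_succ]
    rw [ENNReal.tsum_mul_right, ENNReal.tsum_geometric, ENNReal.one_sub_inv_two, inv_inv]
    rw [mul_comm, ENNReal.inv_mul_cancel two_ne_zero ENNReal.ofNat_ne_top]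
  have hsum : ∑' n : ℕ, μ {ω | n < f ω} ≤ (a:ℝ≥0∞) + 1 := by
    rw [aux_split (fun n => μ {ω | n < f ω}) a]
    have h1 : ∑ n ∈ Finset.range a, μ {ω | n < f ω} ≤ (a:ℝ≥0∞) := by
      calc ∑ n ∈ Finset.range a, μ {ω | n < f ω}
          ≤ ∑ _ ∈ Finset.range a, (1:ℝ≥0∞) :=
            Finset.sum_le_sum (fun n _ => prob_le_one)
        _ = a := by simp
    have h2 : ∑' n : ℕ, μ {ω | (n + a) < f ω} ≤ 1 := by
      calc ∑' n : ℕ, μ {ω | (n + a) < f ω}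
          ≤ ∑' n : ℕ, (M:ℝ≥0∞) * ((1+p)^K * 2⁻¹^(n+a+1)) :=
            ENNReal.tsum_le_tsum (fun n => tail (n+a))
        _ = ((M:ℝ≥0∞) * (1+p)^K * 2⁻¹^a) * ∑' n : ℕ, (2⁻¹:ℝ≥0∞)^(n+1) := by
            rw [← ENNReal.tsum_mul_left]
            refine tsum_congr fun n => ?_
            have : (2⁻¹:ℝ≥0∞)^(n+a+1) = 2⁻¹^a * 2⁻¹^(n+1) := by
              rw [← pow_add]; ring_nf
            rw [this]; ring
        _ ≤ 1 * 1 := by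
            rw [geo]
            exact mul_le_mul_left hA 1
        _ = 1 := one_mul 1
    exact add_le_add h1 h2
  have hlint : ∫⁻ ω, (f ω : ℝ≥0∞) ∂μ ≤ (a:ℝ≥0∞) + 1 := by
    rw [aux_lintegral_nat μ f hfmeas]; exact hsum
  -- convert to Bochner integral
  have hcast : Measurable fun ω => ((f ω : ℕ) : ℝ) :=
    (measurable_of_countable _).comp hfmeas
  have hieq : ∫ ω, ((f ω : ℕ) : ℝ) ∂μ = (∫⁻ ω, (f ω : ℝ≥0∞) ∂μ).toReal := by
    rw [integral_eq_lintegral_of_nonneg_ae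
      (Filter.Eventually.of_forall fun ω => Nat.cast_nonneg _) hcast.aestronglyMeasurable]
    congr 1
    refine lintegral_congr fun ω => ?_
    rw [ENNReal.ofReal_natCast]
  have hfinal : ∫ ω, ((f ω : ℕ) : ℝ) ∂μ ≤ (a:ℝ) + 1 := by
    rw [hieq]
    calc (∫⁻ ω, (f ω : ℝ≥0∞) ∂μ).toReal ≤ ((a:ℝ≥0∞) + 1).toReal := by
          apply ENNReal.toReal_mono _ hlint
          simp
      _ = (a:ℝ) + 1 := by
          rw [ENNReal.toReal_add (by simp) (by simp), ENNReal.toReal_natCast, ENNReal.toReal_one]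
  refine le_trans hfinal ?_
  have ha1 : (a:ℝ) < ((K:ℝ) * p' + Real.log M) / Real.log 2 + 1 :=
    Nat.ceil_lt_add_one harg0
  have hlog2 : (0.6931471803:ℝ) < Real.log 2 := Real.log_two_gt_d9
  have hKp : 0 ≤ (K:ℝ) * p' := by positivity
  have hdiv : ((K:ℝ) * p' + Real.log M) / Real.log 2 ≤ 2 * ((K:ℝ)*p') + 3 * Real.log M := by
    rw [div_le_iff₀ hl2]
    nlinarith [mul_nonneg hKp (by linarith : (0:ℝ) ≤ 2 * Real.log 2 - 1),
      mul_nonneg hlogM (by linarith : (0:ℝ) ≤ 3 * Real.log 2 - 1)]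
  have : (2:ℝ) * K * p' = 2 * ((K:ℝ)*p') := by ring
  linarith
end
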